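/- For every integer n ≥ 1, the number of pairs (x, y) of nonnegative integers satisfying g_n·x + g_{n+2}·y ≤ g_n·g_{n+2} equals (g_n + 1)(g_{n+2} + 1)/2 + 1, and this number also equals (g_{n+1}² + 3 g_{n+1})/2 + 2. (This counts the lattice points in the closed triangle with vertices (0,0), (g_{n+2},0), and (0,g_n).) -/
import Mathlib


/-- The odd-index Fibonacci numbers `g n = f_{2n-1}`:
`g 1 = 1`, `g 2 = 2`, `g 3 = 5`, `g 4 = 13`, … -/
def g (n : ℕ) : ℕ := Nat.fib (2 * n - 1)

/-- Key counting lemma: for coprime positive `a b`, twice the number of lattice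
points in the triangle `a x + b y ≤ a b`, `x, y ≥ 0` is `(b+1)(a+1) + 2`. -/
lemma tri_count (a b : ℕ) (ha : 0 < a) (hb : 0 < b) (hab : Nat.gcd a b = 1) :
    2 * ((Finset.range (b+1) ×ˢ Finset.range (a+1)).filter
        (fun p => a * p.1 + b * p.2 ≤ a * b)).card = (b+1) * (a+1) + 2 := by
  set F := Finset.range (b+1) ×ˢ Finset.range (a+1) with hF
  set S1 := F.filter (fun p => a * p.1 + b * p.2 ≤ a * b) with hS1
  set S2 := F.filter (fun p => a * b ≤ a * p.1 + b * p.2) with hS2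
  have hcomm : b * a = a * b := mul_comm b a
  have hcards : S1.card = S2.card := by
    apply Finset.card_bij' (fun p _ => (b - p.1, a - p.2)) (fun p _ => (b - p.1, a - p.2))
    · intro p hp
      simp only [hS1, hS2, hF, Finset.mem_filter, Finset.mem_product, Finset.mem_range] at hp ⊢
      obtain ⟨⟨hx, hy⟩, hle⟩ := hp
      have hx' : p.1 ≤ b := by omega
      have hy' : p.2 ≤ a := by omega
      refine ⟨⟨by omega, by omega⟩, ?_⟩
      have e1 : a * (b - p.1) = a * b - a * p.1 := Nat.mul_sub a b p.1
      have e2 : b * (a - p.2) = b * a - b * p.2 := Nat.mul_sub b a p.2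
      have h1 : a * p.1 ≤ a * b := Nat.mul_le_mul_left a hx'
      have h2 : b * p.2 ≤ b * a := Nat.mul_le_mul_left b hy'
      rw [e1, e2]
      omega
    · intro p hp
      simp only [hS1, hS2, hF, Finset.mem_filter, Finset.mem_product, Finset.mem_range] at hp ⊢
      obtain ⟨⟨hx, hy⟩, hle⟩ := hp
      have hx' : p.1 ≤ b := by omega
      have hy' : p.2 ≤ a := by omega
      refine ⟨⟨by omega, by omega⟩, ?_⟩
      have e1 : a * (b - p.1) = a * b - a * p.1 := Nat.mul_sub a b p.1
      have e2 : b * (a - p.2) = b * a - b * p.2 := Nat.mul_sub b a p.2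
      have h1 : a * p.1 ≤ a * b := Nat.mul_le_mul_left a hx'
      have h2 : b * p.2 ≤ b * a := Nat.mul_le_mul_left b hy'
      rw [e1, e2]
      omega
    · intro p hp
      simp only [hS1, hF, Finset.mem_filter, Finset.mem_product, Finset.mem_range] at hp
      obtain ⟨⟨hx, hy⟩, _⟩ := hp
      ext <;> simp <;> omega
    · intro p hp
      simp only [hS2, hF, Finset.mem_filter, Finset.mem_product, Finset.mem_range] at hp
      obtain ⟨⟨hx, hy⟩, _⟩ := hp
      ext <;> simp <;> omega
  have hunion : S1 ∪ S2 = F := by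
    ext p
    simp only [hS1, hS2, Finset.mem_union, Finset.mem_filter]
    constructor
    · rintro (⟨h, _⟩ | ⟨h, _⟩) <;> exact h
    · intro h
      rcases le_total (a * p.1 + b * p.2) (a * b) with h' | h'
      · exact Or.inl ⟨h, h'⟩
      · exact Or.inr ⟨h, h'⟩
  have hinter : S1 ∩ S2 = {(b, 0), (0, a)} := by
    ext p
    simp only [hS1, hS2, hF, Finset.mem_inter, Finset.mem_filter, Finset.mem_product,
      Finset.mem_range, Finset.mem_insert, Finset.mem_singleton]
    constructor
    · rintro ⟨⟨⟨hx, hy⟩, h1⟩, ⟨_, h2⟩⟩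
      have heq : a * p.1 + b * p.2 = a * b := le_antisymm h1 h2
      have hx' : p.1 ≤ b := by omega
      have hdvd : a ∣ b * p.2 := by
        have hh : b * p.2 = a * b - a * p.1 := by omega
        rw [hh, ← Nat.mul_sub]
        exact Dvd.intro _ rfl
      have hay : a ∣ p.2 := (Nat.Coprime.dvd_of_dvd_mul_left hab hdvd)
      obtain ⟨k, hk⟩ := hay
      rcases k with _ | k
      · left
        simp only [Nat.mul_zero] at hk
        have hx0 : a * p.1 = a * b := by rw [hk, Nat.mul_zero, Nat.add_zero] at heq; exact heq
        exact Prod.ext (Nat.eq_of_mul_eq_mul_left ha hx0) hk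
      · right
        have hya : p.2 = a := by nlinarith
        have h0 : a * p.1 = 0 := by
          have : b * p.2 = b * a := by rw [hya]
          omega
        have : p.1 = 0 := by
          rcases Nat.mul_eq_zero.mp h0 with h | h
          · omega
          · exact h
        exact Prod.ext this hya
    · rintro (h | h) <;> subst h <;>
        refine ⟨⟨⟨by omega, by omega⟩, by simp [mul_comm]⟩, ⟨by omega, by omega⟩, by simp [mul_comm]⟩
  have hFcard : F.card = (b+1) * (a+1) := by
    simp [hF, Finset.card_product]
  have key := Finset.card_union_add_card_inter S1 S2
  rw [hunion, hinter, hFcard] at key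
  have h2 : ({(b, 0), (0, a)} : Finset (ℕ × ℕ)).card = 2 := by
    rw [Finset.card_insert_of_notMem, Finset.card_singleton]
    simp only [Finset.mem_singleton, Prod.mk.injEq, not_and]
    intro hb0
    omega
  rw [h2] at key
  omega

/-- Catalan-type identity: `f_{2m+1} f_{2m+3} = f_{2m+2}² + 1`. -/
lemma fib_catalan (m : ℕ) :
    Nat.fib (2*m+1) * Nat.fib (2*m+3) = Nat.fib (2*m+2) ^ 2 + 1 := by
  induction m with
  | zero => decide
  | succ k ih =>
    have r3 : Nat.fib (2*k+3) = Nat.fib (2*k+1) + Nat.fib (2*k+2) := by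
      rw [show 2*k+3 = (2*k+1)+2 by omega, Nat.fib_add_two, show (2*k+1)+1 = 2*k+2 by omega]
    have r4 : Nat.fib (2*k+4) = Nat.fib (2*k+2) + Nat.fib (2*k+3) := by
      rw [show 2*k+4 = (2*k+2)+2 by omega, Nat.fib_add_two, show (2*k+2)+1 = 2*k+3 by omega]
    have r5 : Nat.fib (2*k+5) = Nat.fib (2*k+3) + Nat.fib (2*k+4) := by
      rw [show 2*k+5 = (2*k+3)+2 by omega, Nat.fib_add_two, show (2*k+3)+1 = 2*k+4 by omega]
    have e1 : 2*(k+1)+1 = 2*k+3 := by ring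
    have e2 : 2*(k+1)+2 = 2*k+4 := by ring
    have e3 : 2*(k+1)+3 = 2*k+5 := by ring
    rw [e1, e2, e3, r5, r4, r3]
    rw [r3] at ih
    nlinarith [ih]

theorem stmt_9 (n : ℕ) (hn : 1 ≤ n) :
    2 * Set.ncard {p : ℕ × ℕ | g n * p.1 + g (n + 2) * p.2 ≤ g n * g (n + 2)}
      = (g n + 1) * (g (n + 2) + 1) + 2 ∧
    2 * Set.ncard {p : ℕ × ℕ | g n * p.1 + g (n + 2) * p.2 ≤ g n * g (n + 2)}
      = g (n + 1) ^ 2 + 3 * g (n + 1) + 4 := by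
  obtain ⟨m, rfl⟩ : ∃ m, n = m + 1 := ⟨n - 1, by omega⟩
  have hga : g (m+1) = Nat.fib (2*m+1) := by unfold g; congr 1
  have hgc : g (m+2) = Nat.fib (2*m+3) := by unfold g; congr 1
  have hgb : g (m+3) = Nat.fib (2*m+5) := by unfold g; congr 1
  have r3 : Nat.fib (2*m+3) = Nat.fib (2*m+1) + Nat.fib (2*m+2) := by
    rw [show 2*m+3 = (2*m+1)+2 by omega, Nat.fib_add_two, show (2*m+1)+1 = 2*m+2 by omega]
  have r4 : Nat.fib (2*m+4) = Nat.fib (2*m+2) + Nat.fib (2*m+3) := by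
    rw [show 2*m+4 = (2*m+2)+2 by omega, Nat.fib_add_two, show (2*m+2)+1 = 2*m+3 by omega]
  have r5 : Nat.fib (2*m+5) = Nat.fib (2*m+3) + Nat.fib (2*m+4) := by
    rw [show 2*m+5 = (2*m+3)+2 by omega, Nat.fib_add_two, show (2*m+3)+1 = 2*m+4 by omega]
  set a := g (m+1) with haa
  set c := g (m+2) with hcc
  set b := g (m+3) with hbb
  have ha : 0 < a := by rw [hga]; exact Nat.fib_pos.mpr (by omega)
  have hb : 0 < b := by rw [hgb]; exact Nat.fib_pos.mpr (by omega)
  have hcat := fib_catalan m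
  rw [r3] at hcat
  have hsum : a + b = 3 * c := by rw [hga, hgb, hgc, r5, r4, r3]; ring
  have hprod : a * b = c ^ 2 + 1 := by
    rw [hga, hgb, hgc, r5, r4, r3]
    nlinarith [hcat]
  have hcop : Nat.gcd a b = 1 := by
    rw [hga, hgb, ← Nat.fib_gcd]
    have hg1 : Nat.gcd (2*m+1) (2*m+5) = 1 := by
      have h4 : (2*m+5) = 4 + (2*m+1) := by ring
      rw [h4, Nat.gcd_add_self_right]
      have hodd : Nat.Coprime (2*m+1) 2 := Nat.coprime_two_right.mpr ⟨m, by ring⟩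
      have := Nat.Coprime.pow_right 2 hodd
      simpa using this
    rw [hg1, Nat.fib_one]
  have hset : {p : ℕ × ℕ | a * p.1 + b * p.2 ≤ a * b}
      = ↑((Finset.range (b+1) ×ˢ Finset.range (a+1)).filter
          (fun p => a * p.1 + b * p.2 ≤ a * b)) := by
    ext p
    simp only [Set.mem_setOf_eq, Finset.coe_filter, Finset.mem_product, Finset.mem_range,
      Set.mem_setOf_eq]
    constructor
    · intro h
      refine ⟨⟨?_, ?_⟩, h⟩
      · have h1 : a * p.1 ≤ a * b := le_trans (Nat.le_add_right _ _) h
        have := Nat.le_of_mul_le_mul_left h1 ha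
        omega
      · have h2 : b * p.2 ≤ b * a := by
          rw [mul_comm b a]
          exact le_trans (Nat.le_add_left _ _) h
        have := Nat.le_of_mul_le_mul_left h2 hb
        omega
    · exact fun h => h.2
  have hncard := tri_count a b ha hb hcop
  rw [hset, Set.ncard_coe_finset]
  have e : (b+1)*(a+1) = a*b + a + b + 1 := by ring
  have e2 : (a+1)*(b+1) = a*b + a + b + 1 := by ring
  have hpow : c ^ 2 = c * c := sq c
  constructor
  · omega
  · omega
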